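/- Let $m > 1$ and let $\mathcal{L}(i\tau,i\xi,v) = i\tau + |v|^{m-1}|\xi|^2$. For every multi-index $\alpha = (\alpha_\tau, \alpha_\xi) \in \mathbb{N}_0 \times \mathbb{N}_0^d$ there is a constant $C_\alpha$ such that for all $(\tau, \xi, v)$ with $\tau \ne 0$, $\xi \ne 0$ and $\mathcal{L}(i\tau,i\xi,v) \ne 0$, one has $\left| \partial_\tau^{\alpha_\tau} \partial_\xi^{\alpha_\xi} \frac{1}{\mathcal{L}(i\tau,i\xi,v)} \right| \le C_\alpha \frac{1}{|\mathcal{L}(i\tau,i\xi,v)|} |\tau|^{-\alpha_\tau} |\xi|^{-|\alpha_\xi|}$. -/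

import Mathlib

/-- The kinetic symbol `L(iτ, iξ, v) = iτ + |v|^{m-1}|ξ|²`. -/
noncomputable def kineticSymbol (d : ℕ) (m τ : ℝ) (ξ : Fin d → ℝ) (v : ℝ) : ℂ :=
  Complex.I * (τ : ℂ) + ((|v| ^ (m - 1) * ∑ i, ξ i ^ 2 : ℝ) : ℂ)

/-- Partial derivative in the `i`-th coordinate of `ξ`. -/
noncomputable def pderivXi (d : ℕ) (i : Fin d) (f : (Fin d → ℝ) → ℂ) :
    (Fin d → ℝ) → ℂ :=
  fun ξ => deriv (fun t : ℝ => f (Function.update ξ i t)) (ξ i)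

/-- Multi-index derivative `∂_ξ^α`. -/
noncomputable def mderivXi (d : ℕ) (α : Fin d → ℕ) (f : (Fin d → ℝ) → ℂ) :
    (Fin d → ℝ) → ℂ :=
  (List.finRange d).foldr (fun i g => (pderivXi d i)^[α i] g) f

noncomputable section

namespace InvSymbAux

/-- squared norm of ξ -/
def Ssq (d : ℕ) (ξ : Fin d → ℝ) : ℝ := ∑ i, ξ i ^ 2

/-- abstract symbol with parameter a ≥ 0 -/
def La (d : ℕ) (a τ : ℝ) (ξ : Fin d → ℝ) : ℂ :=
  Complex.I * (τ : ℂ) + ((a * Ssq d ξ : ℝ) : ℂ)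

/-- basic term -/
def Trm (d k : ℕ) (β : Fin d → ℕ) (N : ℕ) (a τ : ℝ) (ξ : Fin d → ℝ) : ℂ :=
  (∏ i, ((ξ i : ℂ)) ^ β i) * (a : ℂ) ^ N / (La d a τ ξ) ^ k

lemma La_im (d : ℕ) (a τ : ℝ) (ξ : Fin d → ℝ) : (La d a τ ξ).im = τ := by
  simp [La]

lemma La_re (d : ℕ) (a τ : ℝ) (ξ : Fin d → ℝ) : (La d a τ ξ).re = a * Ssq d ξ := by
  simp [La]

lemma La_ne_zero {d : ℕ} {a τ : ℝ} (ξ : Fin d → ℝ) (hτ : τ ≠ 0) : La d a τ ξ ≠ 0 := by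
  intro h
  have := congrArg Complex.im h
  rw [La_im] at this
  simp at this
  exact hτ this

lemma abs_tau_le (d : ℕ) (a τ : ℝ) (ξ : Fin d → ℝ) : |τ| ≤ ‖La d a τ ξ‖ := by
  have := Complex.abs_im_le_norm (La d a τ ξ)
  rwa [La_im] at this

lemma re_le_abs' (d : ℕ) (a τ : ℝ) (ξ : Fin d → ℝ) (ha : 0 ≤ a) (hS : 0 ≤ Ssq d ξ) :
    a * Ssq d ξ ≤ ‖La d a τ ξ‖ := by
  have h := Complex.abs_re_le_norm (La d a τ ξ)
  rw [La_re] at h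
  calc a * Ssq d ξ ≤ |a * Ssq d ξ| := le_abs_self _
    _ ≤ ‖La d a τ ξ‖ := h

lemma Ssq_nonneg (d : ℕ) (ξ : Fin d → ℝ) : 0 ≤ Ssq d ξ :=
  Finset.sum_nonneg fun _ _ => sq_nonneg _

lemma Ssq_pos {d : ℕ} {ξ : Fin d → ℝ} (hξ : ξ ≠ 0) : 0 < Ssq d ξ := by
  obtain ⟨j, hj⟩ := Function.ne_iff.1 hξ
  exact Finset.sum_pos' (fun i _ => sq_nonneg _) ⟨j, Finset.mem_univ j, lt_of_le_of_ne (sq_nonneg _) (Ne.symm (pow_ne_zero 2 hj))⟩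


lemma hasDerivAt_pow' {f : ℝ → ℂ} {f' : ℂ} {x : ℝ} (hf : HasDerivAt f f' x) (k : ℕ) :
    HasDerivAt (fun t => f t ^ k) ((k : ℂ) * f x ^ (k - 1) * f') x := by
  induction k with
  | zero => simpa using hasDerivAt_const x (1 : ℂ)
  | succ n ih =>
    have h := ih.mul hf
    have e : ∀ t, f t ^ n * f t = f t ^ (n + 1) := fun t => (pow_succ _ _).symm
    simp only [Pi.mul_def, e] at h
    refine h.congr_deriv ?_
    rcases n with _ | m
    · simp
    · push_cast
      ring_nf

lemma hasDerivAt_inv_pow {f : ℝ → ℂ} {f' : ℂ} {x : ℝ} (hf : HasDerivAt f f' x)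
    (hfx : f x ≠ 0) (k : ℕ) :
    HasDerivAt (fun t => (f t ^ k)⁻¹) (-(k : ℂ) * f' / f x ^ (k + 1)) x := by
  have h := (hasDerivAt_inv (pow_ne_zero k hfx)).comp x (hasDerivAt_pow' hf k)
  simp only [Function.comp_def] at h
  refine h.congr_deriv ?_
  rcases k with _ | n
  · simp
  · rw [Nat.add_sub_cancel]
    field_simp
    ring

lemma hasDerivAt_coe (x : ℝ) : HasDerivAt (fun t : ℝ => (t : ℂ)) 1 x := by
  simpa using (hasDerivAt_id x).ofReal_comp

/-! derivatives in τ -/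

lemma hasDerivAt_La_tau (d : ℕ) (a : ℝ) (ξ : Fin d → ℝ) (τ : ℝ) :
    HasDerivAt (fun τ' => La d a τ' ξ) Complex.I τ := by
  have h := ((hasDerivAt_coe τ).const_mul Complex.I).add_const ((a * Ssq d ξ : ℝ) : ℂ)
  simpa [La] using h

lemma hasDerivAt_Trm_tau {d : ℕ} (k : ℕ) (β : Fin d → ℕ) (N : ℕ) (a : ℝ) {τ : ℝ}
    (ξ : Fin d → ℝ) (hτ : τ ≠ 0) :
    HasDerivAt (fun τ' => Trm d k β N a τ' ξ)
      ((-(k : ℂ) * Complex.I) * Trm d (k + 1) β N a τ ξ) τ := by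
  have h := (hasDerivAt_inv_pow (hasDerivAt_La_tau d a ξ τ) (La_ne_zero ξ hτ) k).const_mul
    ((∏ i, ((ξ i : ℂ)) ^ β i) * (a : ℂ) ^ N)
  have e : ∀ τ', (∏ i, ((ξ i : ℂ)) ^ β i) * (a : ℂ) ^ N * ((La d a τ' ξ) ^ k)⁻¹
      = Trm d k β N a τ' ξ := by
    intro τ'; rw [Trm, div_eq_mul_inv]
  simp only [e] at h
  refine h.congr_deriv ?_
  rw [Trm, div_eq_mul_inv]
  ring

/-! derivatives in ξ -/

lemma Ssq_update (d : ℕ) (ξ : Fin d → ℝ) (i : Fin d) (t : ℝ) :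
    Ssq d (Function.update ξ i t) = (Ssq d ξ - ξ i ^ 2) + t ^ 2 := by
  have h1 : ∀ s : ℝ, Ssq d (Function.update ξ i s)
      = s ^ 2 + ∑ j ∈ Finset.univ \ {i}, ξ j ^ 2 := by
    intro s
    unfold Ssq
    rw [show (fun j => Function.update ξ i s j ^ 2)
        = Function.update (fun j => ξ j ^ 2) i (s ^ 2) from ?_,
      Finset.sum_update_of_mem (Finset.mem_univ i)]
    funext j
    rcases eq_or_ne j i with rfl | hj
    · simp
    · simp [Function.update_of_ne hj]
  have h2 := h1 (ξ i)
  rw [Function.update_eq_self] at h2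
  rw [h1 t, h2]
  ring

lemma prod_pow_update (d : ℕ) (ξ : Fin d → ℝ) (β : Fin d → ℕ) (i : Fin d) (t : ℝ) (n : ℕ) :
    (∏ j, ((Function.update ξ i t j : ℝ) : ℂ) ^ Function.update β i n j)
      = (t : ℂ) ^ n * ∏ j ∈ Finset.univ \ {i}, ((ξ j : ℂ)) ^ β j := by
  rw [show (fun j => ((Function.update ξ i t j : ℝ) : ℂ) ^ Function.update β i n j)
      = Function.update (fun j => ((ξ j : ℝ) : ℂ) ^ β j) i ((t : ℂ) ^ n) from ?_,
    Finset.prod_update_of_mem (Finset.mem_univ i)]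
  funext j
  rcases eq_or_ne j i with rfl | hj
  · simp
  · simp [Function.update_of_ne hj]

lemma prod_pow_split (d : ℕ) (ξ : Fin d → ℝ) (β : Fin d → ℕ) (i : Fin d) :
    (∏ j, ((ξ j : ℂ)) ^ β j)
      = (ξ i : ℂ) ^ β i * ∏ j ∈ Finset.univ \ {i}, ((ξ j : ℂ)) ^ β j := by
  have := prod_pow_update d ξ β i (ξ i) (β i)
  rwa [Function.update_eq_self, Function.update_eq_self] at this

lemma prod_pow_update' (d : ℕ) (ξ : Fin d → ℝ) (β : Fin d → ℕ) (i : Fin d) (n : ℕ) :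
    (∏ j, ((ξ j : ℂ)) ^ Function.update β i n j)
      = (ξ i : ℂ) ^ n * ∏ j ∈ Finset.univ \ {i}, ((ξ j : ℂ)) ^ β j := by
  have := prod_pow_update d ξ β i (ξ i) n
  rwa [Function.update_eq_self] at this

lemma hasDerivAt_La_xi (d : ℕ) (a τ : ℝ) (ξ : Fin d → ℝ) (i : Fin d) :
    HasDerivAt (fun t => La d a τ (Function.update ξ i t)) ((2 * a * ξ i : ℝ) : ℂ) (ξ i) := by
  have e : (fun t => La d a τ (Function.update ξ i t))
      = fun t : ℝ => ((a * ((Ssq d ξ - ξ i ^ 2) + t ^ 2) : ℝ) : ℂ) + Complex.I * (τ : ℂ) := by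
    funext t
    rw [La, Ssq_update]
    ring
  rw [e]
  have h : HasDerivAt (fun t : ℝ => a * ((Ssq d ξ - ξ i ^ 2) + t ^ 2)) (2 * a * ξ i) (ξ i) := by
    have := ((hasDerivAt_pow 2 (ξ i)).const_add (Ssq d ξ - ξ i ^ 2)).const_mul a
    refine this.congr_deriv ?_
    ring
  exact h.ofReal_comp.add_const _

lemma prod_pow_updateξ (d : ℕ) (ξ : Fin d → ℝ) (β : Fin d → ℕ) (i : Fin d) (t : ℝ) :
    (∏ j, ((Function.update ξ i t j : ℝ) : ℂ) ^ β j)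
      = (t : ℂ) ^ β i * ∏ j ∈ Finset.univ \ {i}, ((ξ j : ℂ)) ^ β j := by
  have := prod_pow_update d ξ β i t (β i)
  rwa [Function.update_eq_self] at this

lemma hasDerivAt_Trm_xi {d : ℕ} (k : ℕ) (β : Fin d → ℕ) (N : ℕ) (a : ℝ) {τ : ℝ}
    (ξ : Fin d → ℝ) (i : Fin d) (hτ : τ ≠ 0) :
    HasDerivAt (fun t => Trm d k β N a τ (Function.update ξ i t))
      ((β i : ℂ) * Trm d k (Function.update β i (β i - 1)) N a τ ξ
        + (-(2 * k : ℂ)) * Trm d (k + 1) (Function.update β i (β i + 1)) (N + 1) a τ ξ)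
      (ξ i) := by
  set P : ℂ := ∏ j ∈ Finset.univ \ {i}, ((ξ j : ℂ)) ^ β j with hP
  have hnum := (hasDerivAt_pow' (hasDerivAt_coe (ξ i)) (β i)).mul_const (P * (a : ℂ) ^ N)
  have hinv := hasDerivAt_inv_pow (hasDerivAt_La_xi d a τ ξ i)
    (by rw [Function.update_eq_self]; exact La_ne_zero ξ hτ) k
  have total := hnum.mul hinv
  rw [Function.update_eq_self, Pi.mul_def] at total
  have efun : (fun t => Trm d k β N a τ (Function.update ξ i t))
      = fun t : ℝ => ((t : ℂ) ^ β i * (P * (a : ℂ) ^ N))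
          * ((La d a τ (Function.update ξ i t)) ^ k)⁻¹ := by
    funext t
    rw [Trm, prod_pow_updateξ, div_eq_mul_inv, hP]
    ring
  rw [efun]
  refine total.congr_deriv ?_
  rw [Trm, Trm,
    prod_pow_update' d ξ β i (β i - 1), prod_pow_update' d ξ β i (β i + 1),
    div_eq_mul_inv, div_eq_mul_inv, div_eq_mul_inv, ← hP]
  push_cast
  ring

/-! the bound for basic terms -/

/-- the right-hand side bound quantity -/
def Rbnd (d : ℕ) (aτ aξ : ℕ) (a τ : ℝ) (ξ : Fin d → ℝ) : ℝ :=
  1 / ‖La d a τ ξ‖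
    * (|τ| ^ (-(aτ : ℝ)) * Real.sqrt (Ssq d ξ) ^ (-(aξ : ℝ)))

lemma Rbnd_nonneg (d : ℕ) (aτ aξ : ℕ) (a τ : ℝ) (ξ : Fin d → ℝ) :
    0 ≤ Rbnd d aτ aξ a τ ξ := by
  unfold Rbnd
  positivity

lemma Trm_bound {d : ℕ} (aτ aξ : ℕ) (β : Fin d → ℕ) (N : ℕ)
    (h2N : 2 * N = aξ + ∑ i, β i) {a τ : ℝ} {ξ : Fin d → ℝ}
    (ha : 0 ≤ a) (hτ : τ ≠ 0) (hξ : ξ ≠ 0) :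
    ‖Trm d (1 + aτ + N) β N a τ ξ‖ ≤ Rbnd d aτ aξ a τ ξ := by
  set s : ℝ := Real.sqrt (Ssq d ξ) with hs
  set A : ℝ := ‖La d a τ ξ‖ with hA
  have hSpos : 0 < Ssq d ξ := Ssq_pos hξ
  have hspos : 0 < s := Real.sqrt_pos.2 hSpos
  have hs2 : s ^ 2 = Ssq d ξ := Real.sq_sqrt hSpos.le
  have hApos : 0 < A := by
    rw [hA]; exact norm_pos_iff.mpr (La_ne_zero ξ hτ)
  have hτpos : 0 < |τ| := abs_pos.2 hτ
  have e1 : |τ| ^ (-(aτ : ℝ)) = (|τ| ^ aτ)⁻¹ := by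
    rw [Real.rpow_neg hτpos.le, Real.rpow_natCast]
  have e2 : s ^ (-(aξ : ℝ)) = (s ^ aξ)⁻¹ := by
    rw [Real.rpow_neg hspos.le, Real.rpow_natCast]
  rw [Rbnd, ← hs, ← hA, e1, e2]
  have hτA : |τ| ≤ A := abs_tau_le d a τ ξ
  have haA : a * s ^ 2 ≤ A := by
    rw [hs2]; exact re_le_abs' d a τ ξ ha (Ssq_nonneg d ξ)
  have hnum : ‖(∏ i, ((ξ i : ℂ)) ^ β i) * (a : ℂ) ^ N‖
      ≤ s ^ (∑ i, β i) * a ^ N := by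
    rw [norm_mul, norm_pow, norm_prod]
    simp only [norm_pow, Complex.norm_real, Real.norm_eq_abs]
    rw [abs_of_nonneg ha, ← Finset.prod_pow_eq_pow_sum]
    have hle : ∀ i, |ξ i| ≤ s := fun i => by
      rw [hs, ← Real.sqrt_sq_eq_abs]
      exact Real.sqrt_le_sqrt (Finset.single_le_sum (fun j _ => sq_nonneg (ξ j))
        (Finset.mem_univ i))
    exact mul_le_mul_of_nonneg_right
      (Finset.prod_le_prod (fun i _ => by positivity)
        (fun i _ => pow_le_pow_left₀ (abs_nonneg _) (hle i) _))
      (pow_nonneg ha N)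
  have habsT : ‖Trm d (1 + aτ + N) β N a τ ξ‖
      = ‖(∏ i, ((ξ i : ℂ)) ^ β i) * (a : ℂ) ^ N‖ / A ^ (1 + aτ + N) := by
    rw [Trm, norm_div, norm_pow, hA]
  have hkey : (s ^ (∑ i, β i) * a ^ N) * (A * (|τ| ^ aτ * s ^ aξ)) ≤ A ^ (1 + aτ + N) := by
    have hss : s ^ (∑ i, β i) * s ^ aξ = s ^ (2 * N) := by
      rw [← pow_add]
      congr 1
      omega
    have hcomb : (s ^ (∑ i, β i) * a ^ N) * (A * (|τ| ^ aτ * s ^ aξ))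
        = A * (|τ| ^ aτ * (a * s ^ 2) ^ N) := by
      rw [mul_pow, ← pow_mul, ← hss]
      ring
    have hAk : A ^ (1 + aτ + N) = A * (A ^ aτ * A ^ N) := by
      rw [pow_add, pow_add, pow_one]; ring
    rw [hcomb, hAk]
    gcongr
  have hgoal : ‖Trm d (1 + aτ + N) β N a τ ξ‖ * (A * (|τ| ^ aτ * s ^ aξ)) ≤ 1 := by
    rw [habsT, div_mul_eq_mul_div, div_le_one (by positivity)]
    calc ‖(∏ i, ((ξ i : ℂ)) ^ β i) * (a : ℂ) ^ N‖ * (A * (|τ| ^ aτ * s ^ aξ))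
        ≤ (s ^ (∑ i, β i) * a ^ N) * (A * (|τ| ^ aτ * s ^ aξ)) := by
          gcongr
      _ ≤ A ^ (1 + aτ + N) := hkey
  have hrhs : 1 / A * ((|τ| ^ aτ)⁻¹ * (s ^ aξ)⁻¹) = 1 / (A * (|τ| ^ aτ * s ^ aξ)) := by
    field_simp
  rw [hrhs]
  exact (le_div_iff₀ (by positivity)).2 hgoal

/-! representation predicate -/

inductive Rep (d : ℕ) (aτ aξ : ℕ) : (ℝ → ℝ → (Fin d → ℝ) → ℂ) → Prop
  | term (β : Fin d → ℕ) (N : ℕ) (h : 2 * N = aξ + ∑ i, β i) :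
      Rep d aτ aξ (Trm d (1 + aτ + N) β N)
  | zero : Rep d aτ aξ (fun _ _ _ => 0)
  | smul (c : ℂ) {F} (hF : Rep d aτ aξ F) : Rep d aτ aξ (fun a τ ξ => c * F a τ ξ)
  | add {F G} (hF : Rep d aτ aξ F) (hG : Rep d aτ aξ G) :
      Rep d aτ aξ (fun a τ ξ => F a τ ξ + G a τ ξ)

lemma sum_update_nat {d : ℕ} (β : Fin d → ℕ) (i : Fin d) (n : ℕ) :
    ∑ j, Function.update β i n j = n + ∑ j ∈ Finset.univ \ {i}, β j :=
  Finset.sum_update_of_mem (Finset.mem_univ i) β n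

lemma sum_split_nat {d : ℕ} (β : Fin d → ℕ) (i : Fin d) :
    ∑ j, β j = β i + ∑ j ∈ Finset.univ \ {i}, β j := by
  have := sum_update_nat β i (β i)
  rwa [Function.update_eq_self] at this

lemma Rep.deriv_tau {d aτ aξ : ℕ} {F : ℝ → ℝ → (Fin d → ℝ) → ℂ} (hF : Rep d aτ aξ F) :
    ∃ G, Rep d (aτ + 1) aξ G ∧ ∀ (a τ : ℝ) (ξ : Fin d → ℝ), 0 ≤ a → τ ≠ 0 →
      HasDerivAt (fun τ' => F a τ' ξ) (G a τ ξ) τ := by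
  induction hF with
  | term β N h =>
    refine ⟨fun a τ ξ => (-((1 + aτ + N : ℕ) : ℂ) * Complex.I)
        * Trm d (1 + aτ + N + 1) β N a τ ξ, ?_, ?_⟩
    · have e : 1 + (aτ + 1) + N = 1 + aτ + N + 1 := by omega
      have := Rep.smul (d := d) (-((1 + aτ + N : ℕ) : ℂ) * Complex.I)
        (Rep.term (aτ := aτ + 1) (aξ := aξ) β N h)
      rwa [e] at this
    · intro a τ ξ _ hτ
      exact hasDerivAt_Trm_tau (1 + aτ + N) β N a ξ hτ
  | zero =>
    exact ⟨fun _ _ _ => 0, Rep.zero, fun a τ ξ _ _ => hasDerivAt_const τ 0⟩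
  | smul c hF ih =>
    obtain ⟨G, hG, hd⟩ := ih
    exact ⟨fun a τ ξ => c * G a τ ξ, Rep.smul c hG,
      fun a τ ξ ha hτ => (hd a τ ξ ha hτ).const_mul c⟩
  | add hF hG ihF ihG =>
    obtain ⟨G₁, hG₁, hd₁⟩ := ihF
    obtain ⟨G₂, hG₂, hd₂⟩ := ihG
    exact ⟨fun a τ ξ => G₁ a τ ξ + G₂ a τ ξ, Rep.add hG₁ hG₂,
      fun a τ ξ ha hτ => (hd₁ a τ ξ ha hτ).add (hd₂ a τ ξ ha hτ)⟩

lemma Rep.deriv_xi {d aτ aξ : ℕ} (i : Fin d) {F : ℝ → ℝ → (Fin d → ℝ) → ℂ}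
    (hF : Rep d aτ aξ F) :
    ∃ G, Rep d aτ (aξ + 1) G ∧ ∀ (a τ : ℝ) (ξ : Fin d → ℝ), 0 ≤ a → τ ≠ 0 →
      HasDerivAt (fun t => F a τ (Function.update ξ i t)) (G a τ ξ) (ξ i) := by
  induction hF with
  | term β N h =>
    refine ⟨fun a τ ξ => (β i : ℂ) * Trm d (1 + aτ + N) (Function.update β i (β i - 1)) N a τ ξ
        + (-(2 * (1 + aτ + N : ℕ) : ℂ))
          * Trm d (1 + aτ + N + 1) (Function.update β i (β i + 1)) (N + 1) a τ ξ, ?_, ?_⟩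
    · have hsplit := sum_split_nat β i
      refine Rep.add ?_ ?_
      · rcases Nat.eq_zero_or_pos (β i) with h0 | hpos
        · have e : (fun (a τ : ℝ) (ξ : Fin d → ℝ) => (β i : ℂ)
              * Trm d (1 + aτ + N) (Function.update β i (β i - 1)) N a τ ξ)
              = fun _ _ _ => (0 : ℂ) := by
            funext a τ ξ
            rw [h0]
            simp
          rw [e]
          exact Rep.zero
        · exact Rep.smul _ (Rep.term _ N (by
            rw [sum_update_nat]
            omega))
      · exact Rep.smul _ (Rep.term _ (N + 1) (by
          rw [sum_update_nat]
          omega))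
    · intro a τ ξ _ hτ
      exact hasDerivAt_Trm_xi (1 + aτ + N) β N a ξ i hτ
  | zero =>
    exact ⟨fun _ _ _ => 0, Rep.zero, fun a τ ξ _ _ => hasDerivAt_const (ξ i) 0⟩
  | smul c hF ih =>
    obtain ⟨G, hG, hd⟩ := ih
    exact ⟨fun a τ ξ => c * G a τ ξ, Rep.smul c hG,
      fun a τ ξ ha hτ => (hd a τ ξ ha hτ).const_mul c⟩
  | add hF hG ihF ihG =>
    obtain ⟨G₁, hG₁, hd₁⟩ := ihF
    obtain ⟨G₂, hG₂, hd₂⟩ := ihG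
    exact ⟨fun a τ ξ => G₁ a τ ξ + G₂ a τ ξ, Rep.add hG₁ hG₂,
      fun a τ ξ ha hτ => (hd₁ a τ ξ ha hτ).add (hd₂ a τ ξ ha hτ)⟩

lemma Rep.bound {d aτ aξ : ℕ} {F : ℝ → ℝ → (Fin d → ℝ) → ℂ} (hF : Rep d aτ aξ F) :
    ∃ C : ℝ, 0 < C ∧ ∀ (a τ : ℝ) (ξ : Fin d → ℝ), 0 ≤ a → τ ≠ 0 → ξ ≠ 0 →
      ‖F a τ ξ‖ ≤ C * Rbnd d aτ aξ a τ ξ := by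
  induction hF with
  | term β N h =>
    exact ⟨1, one_pos, fun a τ ξ ha hτ hξ => by
      rw [one_mul]
      exact Trm_bound aτ aξ β N h ha hτ hξ⟩
  | zero =>
    exact ⟨1, one_pos, fun a τ ξ ha hτ hξ => by
      simp [Rbnd_nonneg]⟩
  | smul c hF ih =>
    obtain ⟨C, hC, hb⟩ := ih
    refine ⟨C * (‖c‖ + 1), by positivity, fun a τ ξ ha hτ hξ => ?_⟩
    rw [norm_mul]
    have h1 := hb a τ ξ ha hτ hξ
    have h2 := Rbnd_nonneg d aτ aξ a τ ξ
    nlinarith [norm_nonneg c, norm_nonneg (F a τ ξ),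
      mul_le_mul_of_nonneg_left h1 (norm_nonneg c)]
  | add hF hG ihF ihG =>
    obtain ⟨C₁, hC₁, hb₁⟩ := ihF
    obtain ⟨C₂, hC₂, hb₂⟩ := ihG
    refine ⟨C₁ + C₂, by positivity, fun a τ ξ ha hτ hξ => ?_⟩
    calc ‖_ + _‖ ≤ _ + _ := norm_add_le _ _
      _ ≤ C₁ * Rbnd d aτ aξ a τ ξ + C₂ * Rbnd d aτ aξ a τ ξ :=
          add_le_add (hb₁ a τ ξ ha hτ hξ) (hb₂ a τ ξ ha hτ hξ)
      _ = (C₁ + C₂) * Rbnd d aτ aξ a τ ξ := by ring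

/-! plumbing: pderivXi / mderivXi / iterated deriv -/

lemma rep_pderiv {d aτ aξ : ℕ} (i : Fin d) {F : ℝ → ℝ → (Fin d → ℝ) → ℂ}
    (hF : Rep d aτ aξ F) :
    ∃ G, Rep d aτ (aξ + 1) G ∧ ∀ (a τ : ℝ), 0 ≤ a → τ ≠ 0 →
      ∀ g : (Fin d → ℝ) → ℂ, (∀ ξ, g ξ = F a τ ξ) →
      ∀ ξ, pderivXi d i g ξ = G a τ ξ := by
  obtain ⟨G, hG, hd⟩ := hF.deriv_xi i
  refine ⟨G, hG, fun a τ ha hτ g hg ξ => ?_⟩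
  unfold pderivXi
  have e : (fun t => g (Function.update ξ i t)) = fun t => F a τ (Function.update ξ i t) :=
    funext fun t => hg _
  rw [e, (hd a τ ξ ha hτ).deriv]

lemma rep_pderiv_iter {d aτ : ℕ} (i : Fin d) (n : ℕ) :
    ∀ {aξ : ℕ} {F : ℝ → ℝ → (Fin d → ℝ) → ℂ}, Rep d aτ aξ F →
    ∃ G, Rep d aτ (aξ + n) G ∧ ∀ (a τ : ℝ), 0 ≤ a → τ ≠ 0 →
      ∀ g : (Fin d → ℝ) → ℂ, (∀ ξ, g ξ = F a τ ξ) →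
      ∀ ξ, ((pderivXi d i)^[n] g) ξ = G a τ ξ := by
  induction n with
  | zero => exact fun {aξ F} hF => ⟨F, hF, fun a τ _ _ g hg ξ => hg ξ⟩
  | succ n ih =>
    intro aξ F hF
    obtain ⟨G₁, hG₁, h₁⟩ := rep_pderiv i hF
    obtain ⟨G₂, hG₂, h₂⟩ := ih hG₁
    refine ⟨G₂, by rwa [show aξ + 1 + n = aξ + (n + 1) by omega] at hG₂,
      fun a τ ha hτ g hg ξ => ?_⟩
    rw [Function.iterate_succ_apply]
    exact h₂ a τ ha hτ _ (fun ξ' => h₁ a τ ha hτ g hg ξ') ξ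

lemma rep_foldr {d aτ : ℕ} (αξ : Fin d → ℕ) (l : List (Fin d)) :
    ∀ {aξ : ℕ} {F : ℝ → ℝ → (Fin d → ℝ) → ℂ}, Rep d aτ aξ F →
    ∃ G, Rep d aτ (aξ + (l.map αξ).sum) G ∧ ∀ (a τ : ℝ), 0 ≤ a → τ ≠ 0 →
      ∀ g : (Fin d → ℝ) → ℂ, (∀ ξ, g ξ = F a τ ξ) →
      ∀ ξ, (l.foldr (fun i g => (pderivXi d i)^[αξ i] g) g) ξ = G a τ ξ := by
  induction l with
  | nil => exact fun {aξ F} hF => ⟨F, by simpa using hF, fun a τ _ _ g hg ξ => hg ξ⟩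
  | cons i l ih =>
    intro aξ F hF
    obtain ⟨G₁, hG₁, h₁⟩ := ih hF
    obtain ⟨G₂, hG₂, h₂⟩ := rep_pderiv_iter i (αξ i) hG₁
    refine ⟨G₂, by
      rwa [show aξ + (l.map αξ).sum + αξ i = aξ + ((i :: l).map αξ).sum by
        simp [List.sum_cons]; omega] at hG₂, fun a τ ha hτ g hg ξ => ?_⟩
    simp only [List.foldr_cons]
    exact h₂ a τ ha hτ _ (fun ξ' => h₁ a τ ha hτ g hg ξ') ξ

lemma rep_deriv_iter {d aξ : ℕ} (n : ℕ) :
    ∀ {aτ : ℕ} {F : ℝ → ℝ → (Fin d → ℝ) → ℂ}, Rep d aτ aξ F →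
    ∃ G, Rep d (aτ + n) aξ G ∧ ∀ (a : ℝ) (ξ : Fin d → ℝ), 0 ≤ a →
      ∀ h : ℝ → ℂ, (∀ τ', τ' ≠ 0 → h τ' = F a τ' ξ) →
      ∀ τ, τ ≠ 0 → deriv^[n] h τ = G a τ ξ := by
  induction n with
  | zero => exact fun {aτ F} hF => ⟨F, hF, fun a ξ _ h hh τ hτ => hh τ hτ⟩
  | succ n ih =>
    intro aτ F hF
    obtain ⟨G₁, hG₁, hd₁⟩ := hF.deriv_tau
    obtain ⟨G₂, hG₂, h₂⟩ := ih hG₁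
    refine ⟨G₂, by rwa [show aτ + 1 + n = aτ + (n + 1) by omega] at hG₂,
      fun a ξ ha h hh τ hτ => ?_⟩
    rw [Function.iterate_succ_apply]
    refine h₂ a ξ ha (deriv h) (fun τ' hτ' => ?_) τ hτ
    have hev : h =ᶠ[nhds τ'] fun τ'' => F a τ'' ξ := by
      filter_upwards [isOpen_compl_singleton.mem_nhds
        (by simpa [Set.mem_compl_iff] using hτ' : τ' ∈ ({(0:ℝ)}ᶜ : Set ℝ))] with x hx
      exact hh x (by simpa using hx)
    rw [hev.deriv_eq, (hd₁ a τ' ξ ha hτ').deriv]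

lemma Trm_base (d : ℕ) (a τ : ℝ) (ξ : Fin d → ℝ) :
    Trm d (1 + 0 + 0) (fun _ => 0) 0 a τ ξ = (La d a τ ξ)⁻¹ := by
  rw [Trm]
  simp

end InvSymbAux

/-- Lemma B.3: derivative bounds for the inverse kinetic symbol. -/
theorem inverse_symbol_derivative_bounds (d : ℕ) (m : ℝ) (hm : 1 < m)
    (ατ : ℕ) (αξ : Fin d → ℕ) :
    ∃ C : ℝ, 0 < C ∧ ∀ (τ : ℝ) (ξ : Fin d → ℝ) (v : ℝ),
      τ ≠ 0 → ξ ≠ 0 → kineticSymbol d m τ ξ v ≠ 0 →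
      ‖(deriv^[ατ]
          (fun τ' : ℝ => mderivXi d αξ (fun ξ' => (kineticSymbol d m τ' ξ' v)⁻¹) ξ)) τ‖ ≤
        C * (1 / ‖kineticSymbol d m τ ξ v‖) * |τ| ^ (-(ατ : ℝ)) *
          Real.sqrt (∑ i, ξ i ^ 2) ^ (-((∑ i, αξ i : ℕ) : ℝ)) := by
  classical
  have hbase : InvSymbAux.Rep d 0 0
      (fun a τ ξ => (InvSymbAux.La d a τ ξ)⁻¹) := by
    have e : (fun (a τ : ℝ) (ξ : Fin d → ℝ) => (InvSymbAux.La d a τ ξ)⁻¹)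
        = InvSymbAux.Trm d (1 + 0 + 0) (fun _ => 0) 0 := by
      funext a τ ξ
      rw [InvSymbAux.Trm_base]
    rw [e]
    exact InvSymbAux.Rep.term _ 0 (by simp)
  obtain ⟨G, hG, hGe⟩ := InvSymbAux.rep_foldr αξ (List.finRange d) hbase
  rw [show ((List.finRange d).map αξ).sum = ∑ i, αξ i from (Fin.sum_univ_def αξ).symm,
    Nat.zero_add] at hG
  obtain ⟨H, hH, hHe⟩ := InvSymbAux.rep_deriv_iter ατ hG
  rw [Nat.zero_add] at hH
  obtain ⟨C, hC, hb⟩ := hH.bound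
  refine ⟨C, hC, fun τ ξ v hτ hξ _ => ?_⟩
  have ha : 0 ≤ |v| ^ (m - 1) := Real.rpow_nonneg (abs_nonneg v) _
  have hLeq : ∀ (τ' : ℝ) (ξ' : Fin d → ℝ),
      kineticSymbol d m τ' ξ' v = InvSymbAux.La d (|v| ^ (m - 1)) τ' ξ' := fun _ _ => rfl
  have hder : deriv^[ατ]
      (fun τ' : ℝ => mderivXi d αξ (fun ξ' => (kineticSymbol d m τ' ξ' v)⁻¹) ξ) τ
      = H (|v| ^ (m - 1)) τ ξ := by
    refine hHe (|v| ^ (m - 1)) ξ ha _ (fun τ' hτ' => ?_) τ hτ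
    show mderivXi d αξ (fun ξ' => (kineticSymbol d m τ' ξ' v)⁻¹) ξ = _
    unfold mderivXi
    refine hGe (|v| ^ (m - 1)) τ' ha hτ' _ (fun ξ' => ?_) ξ
    rw [hLeq]
  rw [hder]
  calc ‖H (|v| ^ (m - 1)) τ ξ‖
      ≤ C * InvSymbAux.Rbnd d ατ (∑ i, αξ i) (|v| ^ (m - 1)) τ ξ :=
        hb (|v| ^ (m - 1)) τ ξ ha hτ hξ
    _ = C * (1 / ‖kineticSymbol d m τ ξ v‖) * |τ| ^ (-(ατ : ℝ)) *
          Real.sqrt (∑ i, ξ i ^ 2) ^ (-((∑ i, αξ i : ℕ) : ℝ)) := by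
        rw [InvSymbAux.Rbnd, InvSymbAux.Ssq, hLeq τ ξ]
        ring
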